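/- The function φ(z) = e^{z} · (1 + z/(e^{z} − 1))² is nondecreasing on (0,∞); that is, for all real 0 < z₁ ≤ z₂, e^{z₁}(1 + z₁/(e^{z₁} − 1))² ≤ e^{z₂}(1 + z₂/(e^{z₂} − 1))². -/

import Mathlib

noncomputable def phiAux (z : ℝ) : ℝ := Real.exp (z/2) * (1 + z / (Real.exp z - 1))

lemma phiAux_hasDerivAt (x : ℝ) (hx : 0 < x) :
    HasDerivAt phiAux
      (Real.exp (x/2) * ((Real.exp x + 1) * (Real.exp x - 1 - x)) / (2*(Real.exp x - 1)^2)) x := by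
  have hE : 1 < Real.exp x := by
    rw [show (1:ℝ) = Real.exp 0 by simp]
    exact Real.exp_lt_exp.mpr hx
  have hne : Real.exp x - 1 ≠ 0 := by linarith
  have h1 : HasDerivAt (fun z : ℝ => z/2) (1/2) x := (hasDerivAt_id x).div_const 2
  have h2 : HasDerivAt (fun z : ℝ => Real.exp (z/2)) (Real.exp (x/2) * (1/2)) x := h1.exp
  have h3 : HasDerivAt (fun z : ℝ => z / (Real.exp z - 1))
      ((1*(Real.exp x - 1) - x * Real.exp x)/(Real.exp x - 1)^2) x :=
    (hasDerivAt_id x).div ((Real.hasDerivAt_exp x).sub_const 1) hne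
  have h4 : HasDerivAt (fun z : ℝ => 1 + z / (Real.exp z - 1))
      ((1*(Real.exp x - 1) - x * Real.exp x)/(Real.exp x - 1)^2) x := h3.const_add 1
  have h5 : HasDerivAt phiAux _ x := h2.mul h4
  convert h5 using 1
  field_simp
  ring

lemma phiAux_mono : MonotoneOn phiAux (Set.Ioi 0) := by
  have hint : interior (Set.Ioi (0:ℝ)) = Set.Ioi 0 := isOpen_Ioi.interior_eq
  apply monotoneOn_of_deriv_nonneg (convex_Ioi 0)
  · exact fun x hx => ((phiAux_hasDerivAt x hx).continuousAt).continuousWithinAt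
  · rw [hint]
    exact fun x hx => ((phiAux_hasDerivAt x hx).differentiableAt).differentiableWithinAt
  · rw [hint]
    intro x hx
    rw [(phiAux_hasDerivAt x hx).deriv]
    have hx' : (0:ℝ) < x := hx
    have hE : 1 < Real.exp x := by
      rw [show (1:ℝ) = Real.exp 0 by simp]
      exact Real.exp_lt_exp.mpr hx'
    have h1 : x + 1 ≤ Real.exp x := Real.add_one_le_exp x
    apply div_nonneg
    · apply mul_nonneg (Real.exp_pos _).le
      apply mul_nonneg (by linarith) (by linarith)
    · positivity

/-- Monotonicity of `φ(z) = e^z (1 + z/(e^z - 1))²` on `(0,∞)`, used in the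
corner-point analysis of the proof of Theorem 9. -/
theorem stmt_7 (z₁ z₂ : ℝ) (h0 : 0 < z₁) (h12 : z₁ ≤ z₂) :
    Real.exp z₁ * (1 + z₁ / (Real.exp z₁ - 1)) ^ 2 ≤
      Real.exp z₂ * (1 + z₂ / (Real.exp z₂ - 1)) ^ 2 := by
  have h02 : 0 < z₂ := lt_of_lt_of_le h0 h12
  have key : ∀ z : ℝ, 0 < z →
      Real.exp z * (1 + z / (Real.exp z - 1)) ^ 2 = phiAux z ^ 2 ∧ 0 ≤ phiAux z := by
    intro z hz
    have hE : 1 < Real.exp z := by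
      rw [show (1:ℝ) = Real.exp 0 by simp]
      exact Real.exp_lt_exp.mpr hz
    have hpos : 0 ≤ 1 + z / (Real.exp z - 1) := by
      have : 0 ≤ z / (Real.exp z - 1) := div_nonneg hz.le (by linarith)
      linarith
    constructor
    · unfold phiAux
      rw [mul_pow, ← Real.exp_nat_mul]
      ring_nf
    · exact mul_nonneg (Real.exp_pos _).le hpos
  obtain ⟨e1, p1⟩ := key z₁ h0
  obtain ⟨e2, p2⟩ := key z₂ h02
  rw [e1, e2]
  have := phiAux_mono (Set.mem_Ioi.mpr h0) (Set.mem_Ioi.mpr h02) h12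
  exact pow_le_pow_left₀ p1 this 2
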